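/- Every totally ordered Wajsberg hoop H satisfying the quasi-identity (K) — for all a, b ∈ H, if a ≤ bⁿ for every n ∈ ℕ then a ≤ a·b — is simple, i.e., its only filters are {1} and H. -/
import Mathlib


/-! ## Hoops -/

/-- A hoop: a commutative monoid with an operation `→` (`himp`) satisfying
`x→x = 1`, `x·(x→y) = y·(y→x)` and `x→(y→z) = (x·y)→z`. -/
class Hoop (H : Type*) extends CommMonoid H where
  himp : H → H → H
  himp_self : ∀ x : H, himp x x = 1
  mul_himp_comm : ∀ x y : H, x * himp x y = y * himp y x
  himp_himp : ∀ x y z : H, himp x (himp y z) = himp (x * y) z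

namespace Hoop

variable {H : Type*} [Hoop H]

/-- The hoop order: `x ≤ y` iff `x → y = 1`. -/
def hle (x y : H) : Prop := himp x y = 1

/-- A filter of a hoop: a nonempty subset closed under `·` and upward closed
with respect to the hoop order. -/
def IsFilter (F : Set H) : Prop :=
  F.Nonempty ∧ (∀ x ∈ F, ∀ y ∈ F, x * y ∈ F) ∧ ∀ x ∈ F, ∀ y : H, hle x y → y ∈ F

/-- Key identity: `(x→y)→(x→z) = (y→x)→(y→z)`. -/
lemma key (x y z : H) :
    himp (himp x y) (himp x z) = himp (himp y x) (himp y z) := by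
  rw [himp_himp, himp_himp, mul_comm (himp x y) x, mul_comm (himp y x) y,
    mul_himp_comm x y]

/-- Antisymmetry of the hoop order. -/
lemma hle_antisymm {x y : H} (hxy : hle x y) (hyx : hle y x) : x = y := by
  have h := mul_himp_comm x y
  rw [show himp x y = 1 from hxy, show himp y x = 1 from hyx, mul_one, mul_one] at h
  exact h

/-- Anything of the form `y→x` is below `1`. -/
lemma arrow_himp_one (x y : H) : himp (himp y x) 1 = 1 := by
  have h := key x y y
  rw [himp_self y, himp_self (himp x y)] at h
  exact h.symm

lemma one_himp (x : H) : himp 1 x = x := by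
  have hx : himp x (himp 1 x) = 1 := by
    rw [himp_himp, mul_one, himp_self]
  have ht : himp 1 x = x * himp x 1 := by
    have h := mul_himp_comm 1 x
    rwa [one_mul] at h
  have hxt : himp (himp 1 x) x = 1 := by
    rw [ht, mul_comm, ← himp_himp, himp_self]
    exact arrow_himp_one 1 x
  exact hle_antisymm hxt hx

lemma himp_one (x : H) : himp x 1 = 1 := by
  have h := key (1 : H) x 1
  rw [one_himp, himp_self] at h
  rw [himp_self] at h
  exact h

lemma hle_refl (x : H) : hle x x := himp_self x

lemma hle_one (x : H) : hle x 1 := himp_one x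

lemma hle_trans {x y z : H} (hxy : hle x y) (hyz : hle y z) : hle x z := by
  have h := key x y z
  rw [hle] at hxy hyz ⊢
  rw [hxy, one_himp, hyz, himp_one] at h
  exact h

/-- `x·y ≤ x`. -/
lemma mul_hle_left (x y : H) : hle (x * y) x := by
  rw [hle, mul_comm, ← himp_himp, himp_self, himp_one]

/-- `y ≤ z → (y·z)`. -/
lemma hle_himp_mul (y z : H) : hle y (himp z (y * z)) := by
  rw [hle, himp_himp, himp_self]

/-- Multiplication is monotone. -/
lemma mul_hle_mul_right {x y : H} (h : hle x y) (z : H) : hle (x * z) (y * z) := by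
  have := hle_trans h (hle_himp_mul y z)
  rw [hle, himp_himp] at this
  exact this

end Hoop

/-- every totally ordered Wajsberg hoop satisfying the quasi-identity (K)
(`a ≤ bⁿ` for all `n` implies `a ≤ a·b`) is simple: its only filters are `{1}` and `H`. -/
theorem wajsberg_hoop_K_simple (H : Type*) [Hoop H]
    (total : ∀ x y : H, Hoop.hle x y ∨ Hoop.hle y x)
    (wajsberg : ∀ x y : H, Hoop.himp (Hoop.himp x y) y = Hoop.himp (Hoop.himp y x) x)
    (K : ∀ a b : H, (∀ n : ℕ, Hoop.hle a (b ^ n)) → Hoop.hle a (a * b))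
    (F : Set H) (hF : Hoop.IsFilter F) :
    F = {1} ∨ F = Set.univ := by
  open Hoop in
  obtain ⟨⟨x0, hx0⟩, hmul, hup⟩ := hF
  have h1F : (1 : H) ∈ F := hup x0 hx0 1 (Hoop.hle_one x0)
  by_cases hb : ∀ x ∈ F, x = 1
  · left
    ext x
    simp only [Set.mem_singleton_iff]
    exact ⟨fun hx => hb x hx, fun hx => hx ▸ h1F⟩
  · right
    push_neg at hb
    obtain ⟨b, hbF, hbne⟩ := hb
    -- powers of b are in F
    have hpow : ∀ n : ℕ, b ^ n ∈ F := by
      intro n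
      induction n with
      | zero => simpa using h1F
      | succ n ih => rw [pow_succ]; exact hmul _ ih _ hbF
    ext a
    simp only [Set.mem_univ, iff_true]
    by_cases hex : ∃ n : ℕ, Hoop.hle (b ^ n) a
    · obtain ⟨n, hn⟩ := hex
      exact hup _ (hpow n) a hn
    · exfalso
      push_neg at hex
      have ha : ∀ n : ℕ, Hoop.hle a (b ^ n) := fun n =>
        (total a (b ^ n)).resolve_right (hex n)
      -- a ≤ b
      have hab : Hoop.hle a b := by have := ha 1; rwa [pow_one] at this
      set t := Hoop.himp b a with ht
      -- b * t = a
      have hbt : b * t = a := by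
        have h := Hoop.mul_himp_comm b a
        rw [show Hoop.himp a b = 1 from hab, mul_one] at h
        exact h
      -- a ≤ t
      have hat : Hoop.hle a t := by
        rw [Hoop.hle, ht, Hoop.himp_himp, mul_comm, ← Hoop.himp_himp,
          Hoop.himp_self, Hoop.himp_one]
      -- t ≤ bⁿ for all n
      have htn : ∀ n : ℕ, Hoop.hle t (b ^ n) := by
        intro n
        rcases total t (b ^ n) with h | h
        · exact h
        · exfalso
          apply hex (n + 1)
          have := Hoop.mul_hle_mul_right h b
          rw [mul_comm t b, hbt, ← pow_succ] at this
          exact this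
      -- K gives t ≤ t·b = a
      have hta : Hoop.hle t a := by
        have h := K t b htn
        rwa [mul_comm, hbt] at h
      have hteq : t = a := Hoop.hle_antisymm hta hat
      -- Wajsberg: (a→b)→b = (b→a)→a = a→a = 1, but (a→b)→b = b
      have hw := wajsberg a b
      rw [show Hoop.himp a b = 1 from hab, Hoop.one_himp, ← ht, hteq,
        Hoop.himp_self] at hw
      exact hbne hw
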